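/- Let A be an ℝ-weighted automaton, let A^B be a backward WA of A with base B (where the columns of B form a basis of the backward space of A), and let A^{BF} be a forward WA of A^B with base F̃ (where the rows of F̃ form a basis of the forward space of A^B). Then the size of A^{BF} equals rank(L_A), the dimension of the linear span of the rows of the Hankel matrix of L_A. -/

import Mathlib

open Matrix

noncomputable section

/-- The matrix `M(w)` of a word: `M(ε) = I`, `M(a₁⋯a_k) = M(a₁)⋯M(a_k)`. -/
def wordProd {S : Type*} {Γ : Type*} [Fintype S] [DecidableEq S]
    (M : Γ → Matrix S S ℝ) (w : List Γ) : Matrix S S ℝ :=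
  (w.map M).prod

/-- The language of the weighted automaton `(M, α, η)`: `L(w) = α M(w) η`. -/
def WAlang {S : Type*} {Γ : Type*} [Fintype S] [DecidableEq S]
    (M : Γ → Matrix S S ℝ) (α η : S → ℝ) (w : List Γ) : ℝ :=
  α ⬝ᵥ (wordProd M w).mulVec η

/-- `(Mt, αt, ηt)` is a forward WA of `(M, α, η)` with base `F`. -/
def IsForwardWAOf {Γ : Type*} {n nh : ℕ}
    (M : Γ → Matrix (Fin n) (Fin n) ℝ) (α η : Fin n → ℝ)
    (Mt : Γ → Matrix (Fin nh) (Fin nh) ℝ) (αt ηt : Fin nh → ℝ)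
    (F : Matrix (Fin nh) (Fin n) ℝ) : Prop :=
  LinearIndependent ℝ (fun i => F i) ∧
  Submodule.span ℝ (Set.range (fun i => F i)) =
    Submodule.span ℝ {x : Fin n → ℝ | ∃ w : List Γ, x = Matrix.vecMul α (wordProd M w)} ∧
  (∀ a, F * M a = Mt a * F) ∧
  α = Matrix.vecMul αt F ∧
  ηt = F.mulVec η

/-- `(Mh, αh, ηh)` is a backward WA of `(M, α, η)` with base `B`. -/
def IsBackwardWAOf {Γ : Type*} {n nh : ℕ}
    (M : Γ → Matrix (Fin n) (Fin n) ℝ) (α η : Fin n → ℝ)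
    (Mh : Γ → Matrix (Fin nh) (Fin nh) ℝ) (αh ηh : Fin nh → ℝ)
    (B : Matrix (Fin n) (Fin nh) ℝ) : Prop :=
  LinearIndependent ℝ (fun j => Bᵀ j) ∧
  Submodule.span ℝ (Set.range (fun j => Bᵀ j)) =
    Submodule.span ℝ {x : Fin n → ℝ | ∃ w : List Γ, x = (wordProd M w).mulVec η} ∧
  (∀ a, M a * B = B * Mh a) ∧
  αh = Matrix.vecMul α B ∧
  η = B.mulVec ηh

section Aux

variable {Γ : Type*}

lemma wordProd_append {S : Type*} [Fintype S] [DecidableEq S]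
    (M : Γ → Matrix S S ℝ) (x y : List Γ) :
    wordProd M (x ++ y) = wordProd M x * wordProd M y := by
  simp [wordProd, List.map_append]

lemma wordProd_intertwine {n nb : ℕ} (M : Γ → Matrix (Fin n) (Fin n) ℝ)
    (Mb : Γ → Matrix (Fin nb) (Fin nb) ℝ) (B : Matrix (Fin n) (Fin nb) ℝ)
    (h : ∀ a, M a * B = B * Mb a) (w : List Γ) :
    wordProd M w * B = B * wordProd Mb w := by
  induction w with
  | nil => simp [wordProd]
  | cons a t ih =>
      have : wordProd M (a :: t) = M a * wordProd M t := by simp [wordProd]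
      rw [this, Matrix.mul_assoc, ih, ← Matrix.mul_assoc, h a, Matrix.mul_assoc]
      simp [wordProd]

end Aux

/-- the size of `A^{BF}` equals the rank of the Hankel matrix of `L_A`. -/
theorem size_BF_eq_hankel_rank {Γ : Type*} {n nb n' : ℕ}
    (M : Γ → Matrix (Fin n) (Fin n) ℝ) (α η : Fin n → ℝ)
    (Mb : Γ → Matrix (Fin nb) (Fin nb) ℝ) (αb ηb : Fin nb → ℝ)
    (B : Matrix (Fin n) (Fin nb) ℝ)
    (M' : Γ → Matrix (Fin n') (Fin n') ℝ) (α' η' : Fin n' → ℝ)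
    (F : Matrix (Fin n') (Fin nb) ℝ)
    (hB : IsBackwardWAOf M α η Mb αb ηb B)
    (hF : IsForwardWAOf Mb αb ηb M' α' η' F) :
    (n' : Cardinal) =
      Module.rank ℝ
        ↥(Submodule.span ℝ
          (Set.range (fun x : List Γ => fun y : List Γ => WAlang M α η (x ++ y)))) := by

  obtain ⟨hBind, hBspan, hBint, hab, heta⟩ := hB
  obtain ⟨hFind, hFspan, hFint, ha', he'⟩ := hF
  -- key identity for Hankel entries
  have key : ∀ x y : List Γ, WAlang M α η (x ++ y) =
      Matrix.vecMul αb (wordProd Mb x) ⬝ᵥ (wordProd Mb y).mulVec ηb := by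
    intro x y
    have h1 : wordProd M (x ++ y) * B = B * (wordProd Mb x * wordProd Mb y) := by
      rw [wordProd_append]
      rw [Matrix.mul_assoc, wordProd_intertwine M Mb B hBint y, ← Matrix.mul_assoc,
        wordProd_intertwine M Mb B hBint x, Matrix.mul_assoc]
    calc WAlang M α η (x ++ y)
        = α ⬝ᵥ (wordProd M (x ++ y)).mulVec (B.mulVec ηb) := by rw [WAlang, heta]
      _ = α ⬝ᵥ (wordProd M (x ++ y) * B).mulVec ηb := by rw [Matrix.mulVec_mulVec]
      _ = α ⬝ᵥ (B * (wordProd Mb x * wordProd Mb y)).mulVec ηb := by rw [h1]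
      _ = α ⬝ᵥ B.mulVec ((wordProd Mb x * wordProd Mb y).mulVec ηb) := by
            rw [Matrix.mulVec_mulVec]
      _ = Matrix.vecMul α B ⬝ᵥ (wordProd Mb x * wordProd Mb y).mulVec ηb := by
            rw [Matrix.dotProduct_mulVec]
      _ = αb ⬝ᵥ (wordProd Mb x).mulVec ((wordProd Mb y).mulVec ηb) := by
            rw [hab, Matrix.mulVec_mulVec]
      _ = Matrix.vecMul αb (wordProd Mb x) ⬝ᵥ (wordProd Mb y).mulVec ηb := by
            rw [Matrix.dotProduct_mulVec]
  -- the linear map Φ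
  let Phi : (Fin nb → ℝ) →ₗ[ℝ] (List Γ → ℝ) :=
    { toFun := fun v => fun y => v ⬝ᵥ (wordProd Mb y).mulVec ηb
      map_add' := by intro u v; funext y; simp [add_dotProduct]
      map_smul' := by intro c v; funext y; simp [smul_dotProduct] }
  -- B.mulVec is injective
  have hBinj : Function.Injective B.mulVecLin := by
    rw [← LinearMap.ker_eq_bot, LinearMap.ker_eq_bot']
    intro v hv
    have hsum : ∑ j, v j • Bᵀ j = 0 := by
      funext i
      have : B.mulVec v i = 0 := by rw [show B.mulVec v = 0 from hv]; rfl
      simpa [Matrix.mulVec, dotProduct, Finset.sum_apply, mul_comm] using this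
    funext j
    exact Fintype.linearIndependent_iff.mp hBind v hsum j
  -- backward space of the backward WA is everything
  have himg : ∀ w : List Γ, B.mulVec ((wordProd Mb w).mulVec ηb) = (wordProd M w).mulVec η := by
    intro w
    rw [Matrix.mulVec_mulVec, ← wordProd_intertwine M Mb B hBint w,
      ← Matrix.mulVec_mulVec, ← heta]
  have hbackfull : Submodule.span ℝ
      {x : Fin nb → ℝ | ∃ w : List Γ, x = (wordProd Mb w).mulVec ηb} = ⊤ := by
    apply Submodule.map_injective_of_injective hBinj
    rw [Submodule.map_span, Submodule.map_top, Matrix.range_mulVecLin]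
    have hset : B.mulVecLin '' {x : Fin nb → ℝ | ∃ w : List Γ, x = (wordProd Mb w).mulVec ηb}
        = {x : Fin n → ℝ | ∃ w : List Γ, x = (wordProd M w).mulVec η} := by
      ext u
      constructor
      · rintro ⟨x, ⟨w, rfl⟩, rfl⟩
        exact ⟨w, by rw [Matrix.mulVecLin_apply]; exact himg w⟩
      · rintro ⟨w, rfl⟩
        exact ⟨(wordProd Mb w).mulVec ηb, ⟨w, rfl⟩,
          by rw [Matrix.mulVecLin_apply]; exact himg w⟩
    rw [hset, ← hBspan]; rfl
  -- Phi is injective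
  have hPhiInj : Function.Injective Phi := by
    rw [← LinearMap.ker_eq_bot, LinearMap.ker_eq_bot']
    intro v hv
    have hvanish : ∀ u ∈ Submodule.span ℝ
        {x : Fin nb → ℝ | ∃ w : List Γ, x = (wordProd Mb w).mulVec ηb}, v ⬝ᵥ u = 0 := by
      intro u hu
      induction hu using Submodule.span_induction with
      | mem x hx =>
          obtain ⟨w, rfl⟩ := hx
          exact congrFun hv w
      | zero => simp
      | add x y _ _ hx hy => rw [dotProduct_add, hx, hy, add_zero]
      | smul c x _ hx => rw [dotProduct_smul, hx, smul_zero]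
    have : v ⬝ᵥ v = 0 := hvanish v (by rw [hbackfull]; trivial)
    funext i
    have := (dotProduct_self_eq_zero).mp this
    exact congrFun this i
  -- Hankel rows are Phi of forward vectors
  have hrow : (fun x : List Γ => fun y : List Γ => WAlang M α η (x ++ y))
      = fun x => Phi (Matrix.vecMul αb (wordProd Mb x)) := by
    funext x y; exact key x y
  have hmap : Submodule.span ℝ
      (Set.range (fun x : List Γ => fun y : List Γ => WAlang M α η (x ++ y)))
      = Submodule.map Phi (Submodule.span ℝ
          {x : Fin nb → ℝ | ∃ w : List Γ, x = Matrix.vecMul αb (wordProd Mb w)}) := by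
    rw [Submodule.map_span, hrow]
    congr 1
    ext u
    constructor
    · rintro ⟨x, rfl⟩
      exact ⟨Matrix.vecMul αb (wordProd Mb x), ⟨x, rfl⟩, rfl⟩
    · rintro ⟨x, ⟨w, rfl⟩, rfl⟩
      exact ⟨w, rfl⟩
  rw [hmap, ← hFspan]
  have h := (Submodule.equivMapOfInjective Phi hPhiInj
      (Submodule.span ℝ (Set.range (fun i => F i)))).lift_rank_eq
  rw [rank_span hFind] at h
  have hmk : Cardinal.mk ↑(Set.range fun i => F i) = (n' : Cardinal) := by
    have := Cardinal.mk_range_eq_of_injective hFind.injective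
    simpa [Cardinal.mk_fin] using this
  rw [hmk, Cardinal.lift_natCast] at h
  simpa using h
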